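/- Let k be a commutative Noetherian ring, m ≥ 1, let A := k[[x_1, …, x_m]] be the formal power series ring in m variables over k (MvPowerSeries over Fin m), let M ⊆ A be the ideal generated by x_1, …, x_m, and let I ⊆ A be an ideal. For a prime p of k with residue field κ(p), let I_p be the ideal of κ(p)[[x_1, …, x_m]] generated by the image of I under the coefficientwise ring map k → κ(p), and let M_p be the ideal generated by the variables. Define d_p(I) ∈ ℕ ∪ {∞} as the supremum of those α ∈ ℕ with I_p ⊆ (M_p)^α (so d_p(I) = ∞ when I_p = 0). Then the function p ↦ d_p(I) is upper semicontinuous on Spec k: for every α ∈ ℕ ∪ {∞}, the set {p : d_p(I) ≥ α} is Zariski-closed. (Paper's Fact V.b: upper semicontinuity of the multiplicity.) -/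

import Mathlib

/-- The residue field of a commutative ring at a point of its prime spectrum. -/
noncomputable abbrev ResidueFieldAt {k : Type*} [CommRing k] (p : PrimeSpectrum k) : Type _ :=
  IsLocalRing.ResidueField (Localization.AtPrime p.asIdeal)

/-- The canonical map from a ring to its residue field at a prime. -/
noncomputable def residueMapAt {k : Type*} [CommRing k] (p : PrimeSpectrum k) :
    k →+* ResidueFieldAt p :=
  (IsLocalRing.residue (Localization.AtPrime p.asIdeal)).comp
    (algebraMap k (Localization.AtPrime p.asIdeal))

open MvPowerSeries

lemma FactVb.degree_add {σ : Type*} (a b : σ →₀ ℕ) :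
    (a + b).degree = a.degree + b.degree := by
  simp only [Finsupp.degree_eq_weight_one, map_add]

lemma FactVb.degree_single {σ : Type*} (i : σ) :
    (Finsupp.single i 1).degree = 1 := by
  classical
  exact Finsupp.degree_single i 1

lemma FactVb.constantCoeff_eq_zero_of_mem_span {σ R : Type*} [CommRing R]
    {f : MvPowerSeries σ R}
    (hf : f ∈ Ideal.span (Set.range (X : σ → MvPowerSeries σ R))) :
    coeff 0 f = 0 := by
  have hle : Ideal.span (Set.range (X : σ → MvPowerSeries σ R)) ≤
      RingHom.ker (constantCoeff (σ := σ) (R := R)) := by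
    rw [Ideal.span_le]
    rintro _ ⟨i, rfl⟩
    simp [RingHom.mem_ker]
  have := hle hf
  rw [RingHom.mem_ker] at this
  rw [coeff_zero_eq_constantCoeff_apply]
  exact this

lemma FactVb.coeff_eq_zero_of_mem_pow {σ R : Type*} [CommRing R] :
    ∀ (n : ℕ) (f : MvPowerSeries σ R),
    f ∈ (Ideal.span (Set.range (X : σ → MvPowerSeries σ R))) ^ n →
    ∀ e : σ →₀ ℕ, e.degree < n → coeff e f = 0 := by
  intro n
  induction n with
  | zero => intro f _ e he; omega
  | succ n ih =>
    intro f hf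
    rw [pow_succ'] at hf
    refine Submodule.mul_induction_on hf ?_ ?_
    · intro g hg h hh e he
      classical
      rw [MvPowerSeries.coeff_mul]
      apply Finset.sum_eq_zero
      rintro ⟨a, b⟩ hab
      rw [Finset.HasAntidiagonal.mem_antidiagonal] at hab
      by_cases ha : a = 0
      · subst ha
        rw [FactVb.constantCoeff_eq_zero_of_mem_span hg, zero_mul]
      · have h1 : 1 ≤ a.degree :=
          Nat.one_le_iff_ne_zero.2 (fun h0 => ha ((Finsupp.degree_eq_zero_iff a).1 h0))
        have hdeg : a.degree + b.degree = e.degree := by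
          rw [← FactVb.degree_add, hab]
        have hb : b.degree < n := by omega
        rw [ih h hh b hb, mul_zero]
    · intro x y hx hy e he
      simp [hx e he, hy e he]

lemma FactVb.mem_pow_of_coeff {m : ℕ} {R : Type*} [CommRing R] :
    ∀ (n : ℕ) (f : MvPowerSeries (Fin m) R),
    (∀ e : Fin m →₀ ℕ, e.degree < n → coeff e f = 0) →
    f ∈ (Ideal.span (Set.range (X : Fin m → MvPowerSeries (Fin m) R))) ^ n := by
  intro n
  induction n with
  | zero => intro f _; simp
  | succ n ih =>
    intro f hf
    classical
    let g : Fin m → MvPowerSeries (Fin m) R := fun i e =>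
      if ∀ j, j < i → e j = 0 then coeff (e + Finsupp.single i 1) f else 0
    have hgcoeff : ∀ i e, coeff e (g i) =
        if ∀ j, j < i → e j = 0 then coeff (e + Finsupp.single i 1) f else 0 :=
      fun i e => rfl
    have hterm : ∀ (d : Fin m →₀ ℕ) (i : Fin m), coeff d (X i * g i) =
        if Finsupp.single i 1 ≤ d ∧ (∀ j, j < i → d j = 0) then coeff d f else 0 := by
      intro d i
      rw [X_def, coeff_monomial_mul]
      by_cases h1 : Finsupp.single i 1 ≤ d
      · rw [if_pos h1, one_mul, hgcoeff]
        have hsub : ∀ j, j < i → ((d - Finsupp.single i 1 : Fin m →₀ ℕ)) j = d j := by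
          intro j hj
          rw [Finsupp.tsub_apply, Finsupp.single_apply, if_neg hj.ne', Nat.sub_zero]
        have hcancel : d - Finsupp.single i 1 + Finsupp.single i 1 = d :=
          tsub_add_cancel_of_le h1
        by_cases h2 : ∀ j, j < i → d j = 0
        · rw [if_pos (fun j hj => (hsub j hj).trans (h2 j hj)), if_pos ⟨h1, h2⟩, hcancel]
        · rw [if_neg, if_neg (fun h => h2 h.2)]
          push_neg at h2 ⊢
          obtain ⟨j, hj, hdj⟩ := h2
          exact ⟨j, hj, by rw [hsub j hj]; exact hdj⟩
      · rw [if_neg h1, if_neg (fun h => h1 h.1)]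
    have hfeq : f = ∑ i, X i * g i := by
      ext d
      rw [map_sum, Finset.sum_congr rfl (fun i _ => hterm d i)]
      by_cases hd : d = 0
      · subst hd
        rw [Finset.sum_eq_zero, hf 0 (by simp)]
        intro i _
        rw [if_neg]
        rintro ⟨h1, -⟩
        have := Finsupp.single_le_iff.1 h1
        simp at this
      · have hsupp : d.support.Nonempty := Finsupp.support_nonempty_iff.2 hd
        set i0 := d.support.min' hsupp with hi0
        have hi0mem : d i0 ≠ 0 := Finsupp.mem_support_iff.1 (d.support.min'_mem hsupp)
        rw [Finset.sum_eq_single i0]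
        · rw [if_pos]
          refine ⟨Finsupp.single_le_iff.2 (Nat.one_le_iff_ne_zero.2 hi0mem), ?_⟩
          intro j hj
          by_contra hdj
          exact absurd (d.support.min'_le j (Finsupp.mem_support_iff.2 hdj)) (not_le.2 hj)
        · intro i _ hne
          rw [if_neg]
          rintro ⟨h1, h2⟩
          have hdi : d i ≠ 0 := by
            have := Finsupp.single_le_iff.1 h1; omega
          have hle : i0 ≤ i := d.support.min'_le i (Finsupp.mem_support_iff.2 hdi)
          rcases lt_or_eq_of_le hle with hlt | heq
          · exact hi0mem (h2 i0 hlt)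
          · exact hne heq.symm
        · intro h; exact absurd (Finset.mem_univ i0) h
    have hgmem : ∀ i, g i ∈
        (Ideal.span (Set.range (X : Fin m → MvPowerSeries (Fin m) R))) ^ n := by
      intro i
      apply ih
      intro e he
      rw [hgcoeff]
      split_ifs with h
      · exact hf _ (by rw [FactVb.degree_add, FactVb.degree_single]; omega)
      · rfl
    rw [hfeq, pow_succ']
    exact Ideal.sum_mem _ fun i _ =>
      Ideal.mul_mem_mul (Ideal.subset_span ⟨i, rfl⟩) (hgmem i)

lemma FactVb.residueMapAt_eq_zero_iff {k : Type*} [CommRing k] (p : PrimeSpectrum k) (x : k) :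
    residueMapAt p x = 0 ↔ x ∈ p.asIdeal := by
  rw [residueMapAt, RingHom.comp_apply, IsLocalRing.residue_eq_zero_iff,
    ← Ideal.mem_comap, ← Ideal.under_def, Localization.AtPrime.under_maximalIdeal]

/-- **Paper's Fact V.b**: upper semicontinuity of the multiplicity. Let `k` be a Noetherian
commutative ring, `A = k[[x₁,…,x_m]]`, `M` the ideal of the variables, and `I ⊆ A` an ideal.
For a prime `p` of `k` let `d p ∈ ℕ∞` be the supremum of those `α` with `I_p ⊆ M_p ^ α` in
`κ(p)[[x₁,…,x_m]]` (so `d p = ∞` when `I_p = 0`). Then `p ↦ d p` is upper semicontinuous on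
`Spec k`. -/
theorem fact_V_b (k : Type*) [CommRing k] [IsNoetherianRing k]
    (m : ℕ) (hm : 1 ≤ m)
    (I : Ideal (MvPowerSeries (Fin m) k))
    (d : PrimeSpectrum k → ℕ∞)
    (hd : ∀ p : PrimeSpectrum k,
      d p = ⨆ (α : ℕ) (_ : Ideal.map (MvPowerSeries.map (σ := Fin m) (residueMapAt p)) I ≤
        (Ideal.span (Set.range (MvPowerSeries.X :
          Fin m → MvPowerSeries (Fin m) (ResidueFieldAt p)))) ^ α), (α : ℕ∞)) :
    ∀ α : ℕ∞, IsClosed {p : PrimeSpectrum k | α ≤ d p} := by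
  -- notation
  set S : PrimeSpectrum k → ℕ → Prop := fun p α =>
    Ideal.map (MvPowerSeries.map (σ := Fin m) (residueMapAt p)) I ≤
      (Ideal.span (Set.range (MvPowerSeries.X :
        Fin m → MvPowerSeries (Fin m) (ResidueFieldAt p)))) ^ α with hS
  set P : PrimeSpectrum k → ℕ → Prop := fun p α =>
    ∀ f ∈ I, ∀ e : Fin m →₀ ℕ, e.degree < α → MvPowerSeries.coeff e f ∈ p.asIdeal with hP
  have hSP : ∀ p n, S p n ↔ P p n := by
    intro p n
    rw [hS, hP]
    simp only
    rw [Ideal.map_le_iff_le_comap]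
    constructor
    · intro h f hf e he
      have hmem := h hf
      rw [Ideal.mem_comap] at hmem
      have := FactVb.coeff_eq_zero_of_mem_pow n _ hmem e he
      rw [MvPowerSeries.coeff_map] at this
      exact (FactVb.residueMapAt_eq_zero_iff p _).1 this
    · intro h f hf
      rw [Ideal.mem_comap]
      apply FactVb.mem_pow_of_coeff
      intro e he
      rw [MvPowerSeries.coeff_map]
      exact (FactVb.residueMapAt_eq_zero_iff p _).2 (h f hf e he)
  have hPmono : ∀ p a b, a ≤ b → P p b → P p a := by
    intro p a b hab h f hf e he
    exact h f hf e (lt_of_lt_of_le he hab)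
  have hchar : ∀ (p : PrimeSpectrum k) (n : ℕ), (↑n ≤ d p ↔ P p n) := by
    intro p n
    constructor
    · intro h
      by_contra hPn
      have hn1 : 1 ≤ n := by
        rcases Nat.eq_zero_or_pos n with h0 | h1
        · exact absurd (fun f hf e he => absurd he (by omega)) (h0 ▸ hPn)
        · exact h1
      have hub : d p ≤ ((n - 1 : ℕ) : ℕ∞) := by
        rw [hd p]
        apply iSup₂_le
        intro α hα
        have hPα : P p α := (hSP p α).1 hα
        have : α < n := by
          by_contra hge
          exact hPn (hPmono p n α (by omega) hPα)
        exact_mod_cast by omega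
      have : (n : ℕ∞) ≤ ((n - 1 : ℕ) : ℕ∞) := le_trans h hub
      rw [Nat.cast_le] at this
      omega
    · intro h
      rw [hd p]
      exact le_iSup₂ (f := fun (α : ℕ) (_ : S p α) => (α : ℕ∞)) n ((hSP p n).2 h)
  have key : ∀ n : ℕ, {p : PrimeSpectrum k | (n : ℕ∞) ≤ d p} =
      PrimeSpectrum.zeroLocus {x : k | ∃ f ∈ I, ∃ e : Fin m →₀ ℕ,
        e.degree < n ∧ MvPowerSeries.coeff e f = x} := by
    intro n
    ext p
    simp only [Set.mem_setOf_eq, PrimeSpectrum.mem_zeroLocus, Set.subset_def, SetLike.mem_coe]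
    rw [hchar p n, hP]
    constructor
    · rintro h x ⟨f, hf, e, he, rfl⟩
      exact h f hf e he
    · intro h f hf e he
      exact h _ ⟨f, hf, e, he, rfl⟩
  intro α
  induction α using ENat.recTopCoe with
  | top =>
    have htop : {p : PrimeSpectrum k | ⊤ ≤ d p} =
        ⋂ n : ℕ, {p : PrimeSpectrum k | (n : ℕ∞) ≤ d p} := by
      ext p
      simp only [Set.mem_setOf_eq, Set.mem_iInter]
      constructor
      · intro h n
        exact le_trans le_top h
      · intro h
        by_contra hne
        rw [top_le_iff] at hne
        obtain ⟨n, hn⟩ := WithTop.ne_top_iff_exists.1 hne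
        have := h (n + 1)
        rw [← hn] at this
        have h2 : ((n : ℕ) : ℕ∞) < ((n + 1 : ℕ) : ℕ∞) := by
          exact_mod_cast Nat.lt_succ_self n
        exact h2.not_ge this
    rw [htop]
    exact isClosed_iInter fun n => key n ▸ PrimeSpectrum.isClosed_zeroLocus _
  | coe n =>
    rw [key n]
    exact PrimeSpectrum.isClosed_zeroLocus _
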